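/- If an arm t satisfies μ[t] ≥ μ[s] + ε for all s < t (it is 'convincingly in the skyline'), then every ε'-skyline S with ε' < ε must contain t. -/
import Mathlib


def IsSkyline (n : ℕ) (μ : ℕ → ℝ) (ε : ℝ) (S : Finset ℕ) : Prop :=
  S ⊆ Finset.Icc 1 n ∧
  (∀ t ∈ Finset.Icc 1 n, t ∉ S →
      ∃ s ∈ S, s < t ∧ (∀ s' ∈ S, s' < t → s' ≤ s) ∧ μ s ≥ μ t - ε) ∧
  (∀ s ∈ S, ∀ t ∈ Finset.Icc 1 n, t ≤ s → μ s ≥ μ t - ε)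

/-- If arm `t` is convincingly in the skyline (`μ t ≥ μ s + ε` for all `s < t`),
then every `ε'`-skyline with `ε' < ε` contains `t`. -/
theorem convincingly_in_skyline_mem (n : ℕ) (μ : ℕ → ℝ)
    (hμ : ∀ i ∈ Finset.Icc 1 n, μ i ∈ Set.Icc (0 : ℝ) 1)
    (t : ℕ) (ht : t ∈ Finset.Icc 1 n)
    (ε ε' : ℝ) (hε' : 0 ≤ ε') (hlt : ε' < ε)
    (hconv : ∀ s ∈ Finset.Icc 1 n, s < t → μ t ≥ μ s + ε)
    (S : Finset ℕ) (hS : IsSkyline n μ ε' S) :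
    t ∈ S := by
  by_contra hnot
  obtain ⟨hsub, hcov, -⟩ := hS
  obtain ⟨s, hsS, hst, -, hμs⟩ := hcov t ht hnot
  have hsI := hsub hsS
  have := hconv s hsI hst
  linarith
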